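/- arXiv:1109.2575 — 2 statements merged into one kernel-verified Lean document; each statement's English description precedes it below -/
import Mathlib

section
/- Let (K_n) be a nonnegative stochastic process adapted to a filtration (F_n) with K_0 deterministic, and let (p_n), (r_n) be nonnegative reals such that |E(K_{n+1}-K_n | F_n)| ≤ p_n K_n and E((K_{n+1}-K_n)^2 | F_n) ≤ r_n K_n for all n. Define I_0 = K_0 and I_n = K_n - Σ_{k=0}^{n-1} E(K_{k+1}-K_k | F_k). Then (I_n) is a martingale, and for every n: |K_n - I_n| ≤ Σ_{k=0}^{n-1} p_k q_{k+1,n-1} I_k and E((I_n - I_0)^2) ≤ K_0 Σ_{k=0}^{n-1} r_k q_{0,k-1}, where q_{ℓ,k} = Π_{i=ℓ}^{k} (1+p_i) for ℓ ≤ k and q_{k,k-1} = 1. -/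
open MeasureTheory Finset

lemma aux_integrable_mul {Ω : Type*} {m0 : MeasurableSpace Ω} {μ : Measure Ω} {f g : Ω → ℝ}
    (hf : MemLp f 2 μ) (hg : MemLp g 2 μ) : Integrable (fun ω => f ω * g ω) μ := by
  have hf2 : Integrable (fun ω => f ω ^ 2) μ :=
    (memLp_two_iff_integrable_sq hf.aestronglyMeasurable).mp hf
  have hg2 : Integrable (fun ω => g ω ^ 2) μ :=
    (memLp_two_iff_integrable_sq hg.aestronglyMeasurable).mp hg
  refine Integrable.mono' ((hf2.add hg2).div_const 2)
    (hf.aestronglyMeasurable.mul hg.aestronglyMeasurable) ?_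
  filter_upwards with ω
  rw [Real.norm_eq_abs, abs_le]
  simp only [Pi.add_apply]
  constructor <;> nlinarith [sq_nonneg (f ω + g ω), sq_nonneg (f ω - g ω)]

/-- Lemma on martingale decomposition of a process with controlled drift and
conditional variance. -/
theorem stmt0 {Ω : Type*} {m0 : MeasurableSpace Ω} {μ : Measure Ω}
    [IsProbabilityMeasure μ] (𝒢 : Filtration ℕ m0)
    (K : ℕ → Ω → ℝ) (K0 : ℝ) (p r : ℕ → ℝ)
    (hK0 : ∀ ω, K 0 ω = K0)
    (hadapt : Adapted 𝒢 K)
    (hKnn : ∀ n ω, 0 ≤ K n ω)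
    (hint : ∀ n, Integrable (K n) μ)
    (hsq : ∀ n, Integrable (fun ω => (K n ω) ^ 2) μ)
    (hp : ∀ n, 0 ≤ p n) (hr : ∀ n, 0 ≤ r n)
    (hdrift : ∀ n, ∀ᵐ ω ∂μ, |(μ[K (n + 1) - K n | 𝒢 n]) ω| ≤ p n * K n ω)
    (hvar : ∀ n, ∀ᵐ ω ∂μ,
      (μ[(fun ω => (K (n + 1) ω - K n ω) ^ 2) | 𝒢 n]) ω ≤ r n * K n ω)
    (I : ℕ → Ω → ℝ)
    (hI : ∀ n ω, I n ω = K n ω - ∑ k ∈ Finset.range n, (μ[K (k + 1) - K k | 𝒢 k]) ω) :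
    Martingale I 𝒢 μ ∧
    (∀ n, ∀ᵐ ω ∂μ, |K n ω - I n ω| ≤
        ∑ k ∈ Finset.range n, p k * (∏ i ∈ Finset.Ico (k + 1) n, (1 + p i)) * I k ω) ∧
    (∀ n, ∫ ω, (I n ω - I 0 ω) ^ 2 ∂μ ≤
        K0 * ∑ k ∈ Finset.range n, r k * ∏ i ∈ Finset.Ico 0 k, (1 + p i)) := by
  -- notation
  set d : ℕ → Ω → ℝ := fun k => μ[K (k + 1) - K k | 𝒢 k] with hd
  -- Part 1 : martingale
  have hIeq : I = martingalePart K 𝒢 μ := by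
    funext n ω
    rw [hI]
    simp only [martingalePart, predictablePart, Pi.sub_apply, Finset.sum_apply]
  have hmart : Martingale I 𝒢 μ := hIeq ▸ martingale_martingalePart hadapt.stronglyAdapted hint
  refine ⟨hmart, ?_, ?_⟩
  -- Part 2 : pathwise bound
  · intro n
    have hae : ∀ᵐ ω ∂μ, ∀ k, |d k ω| ≤ p k * K k ω := (ae_all_iff).mpr hdrift
    filter_upwards [hae] with ω hω
    have habs : ∀ m, |K m ω - I m ω| ≤ ∑ k ∈ Finset.range m, p k * K k ω := by
      intro m
      have : K m ω - I m ω = ∑ k ∈ Finset.range m, d k ω := by rw [hI]; ring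
      rw [this]
      exact (Finset.abs_sum_le_sum_abs _ _).trans
        (Finset.sum_le_sum fun k _ => hω k)
    have key : ∀ m, ∑ k ∈ Finset.range m, p k * K k ω ≤
        ∑ k ∈ Finset.range m, p k * (∏ i ∈ Finset.Ico (k + 1) m, (1 + p i)) * I k ω := by
      intro m
      induction m with
      | zero => simp
      | succ n ih =>
        have hK_le : K n ω ≤ I n ω + ∑ k ∈ Finset.range n, p k * K k ω := by
          have := habs n
          have h2 := (abs_le.mp this).2
          linarith
        have h1 : ∑ k ∈ Finset.range (n + 1), p k * K k ω ≤
            (1 + p n) * (∑ k ∈ Finset.range n, p k * K k ω) + p n * I n ω := by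
          rw [Finset.sum_range_succ]
          have := mul_le_mul_of_nonneg_left hK_le (hp n)
          nlinarith [hp n, Finset.sum_nonneg (fun k (_ : k ∈ Finset.range n) =>
            mul_nonneg (hp k) (hKnn k ω))]
        have h2 : (1 + p n) * (∑ k ∈ Finset.range n, p k * K k ω) ≤
            (1 + p n) * (∑ k ∈ Finset.range n,
              p k * (∏ i ∈ Finset.Ico (k + 1) n, (1 + p i)) * I k ω) :=
          mul_le_mul_of_nonneg_left ih (by linarith [hp n])
        have h3 : ∑ k ∈ Finset.range (n + 1),
            p k * (∏ i ∈ Finset.Ico (k + 1) (n + 1), (1 + p i)) * I k ω =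
            (1 + p n) * (∑ k ∈ Finset.range n,
              p k * (∏ i ∈ Finset.Ico (k + 1) n, (1 + p i)) * I k ω) + p n * I n ω := by
          rw [Finset.sum_range_succ, Finset.Ico_self, Finset.prod_empty, Finset.mul_sum]
          congr 1
          · refine Finset.sum_congr rfl fun k hk => ?_
            rw [Finset.prod_Ico_succ_top (Nat.succ_le_of_lt (Finset.mem_range.mp hk))]
            ring
          · ring
        linarith
    exact (habs n).trans (key n)
  -- Part 3 : variance bound
  · -- basic integrability / L² facts
    have hK2 : ∀ n, MemLp (K n) 2 μ := fun n =>
      (memLp_two_iff_integrable_sq (hint n).aestronglyMeasurable).mpr (hsq n)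
    have hd_meas : ∀ k, StronglyMeasurable[𝒢 k] (d k) := fun k => stronglyMeasurable_condExp
    have hd_int : ∀ k, Integrable (d k) μ := fun k => integrable_condExp
    have hd2 : ∀ k, MemLp (d k) 2 μ := by
      intro k
      refine MemLp.of_le ((hK2 k).const_mul (p k))
        ((hd_meas k).mono (𝒢.le k)).aestronglyMeasurable ?_
      filter_upwards [hdrift k] with ω hω
      rw [Real.norm_eq_abs, Real.norm_eq_abs]
      exact hω.trans (le_abs_self _)
    set X : ℕ → Ω → ℝ := fun k ω => (K (k + 1) ω - K k ω) - d k ω with hX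
    have hX2 : ∀ k, MemLp (X k) 2 μ := by
      intro k
      have : X k = (K (k + 1) - K k) - d k := rfl
      rw [this]
      exact ((hK2 (k + 1)).sub (hK2 k)).sub (hd2 k)
    have hX_int : ∀ k, Integrable (X k) μ := fun k =>
      (((hint (k + 1)).sub (hint k)).sub (hd_int k))
    have hJ : ∀ n ω, I n ω - I 0 ω = ∑ k ∈ Finset.range n, X k ω := by
      intro n ω
      rw [hI, hI]
      simp only [hX, Finset.sum_sub_distrib, Finset.sum_range_sub (fun k => K k ω),
        Finset.range_zero, Finset.sum_empty]
      ring
    have hJ2 : ∀ n, MemLp (fun ω => ∑ k ∈ Finset.range n, X k ω) 2 μ := by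
      intro n
      have h : MemLp (∑ k ∈ Finset.range n, X k) 2 μ :=
        memLp_finset_sum' _ (fun k _ => hX2 k)
      have he : (fun ω => ∑ k ∈ Finset.range n, X k ω) = ∑ k ∈ Finset.range n, X k := by
        funext ω; simp [Finset.sum_apply]
      rw [he]; exact h
    have hJmeas : ∀ n, StronglyMeasurable[𝒢 n] (fun ω => ∑ k ∈ Finset.range n, X k ω) := by
      intro n
      have hterm : ∀ k ∈ Finset.range n, StronglyMeasurable[𝒢 n] (X k) := by
        intro k hk
        have hkn : k + 1 ≤ n := Nat.succ_le_of_lt (Finset.mem_range.mp hk)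
        exact (((hadapt (k + 1)).stronglyMeasurable.mono (𝒢.mono hkn)).sub
            ((hadapt k).stronglyMeasurable.mono (𝒢.mono (le_trans (Nat.le_succ k) hkn)))).sub
          ((hd_meas k).mono (𝒢.mono (le_trans (Nat.le_succ k) hkn)))
      have h := Finset.stronglyMeasurable_sum (Finset.range n) hterm
      have he : (fun ω => ∑ k ∈ Finset.range n, X k ω) = ∑ k ∈ Finset.range n, X k := by
        funext ω; simp [Finset.sum_apply]
      rw [he]; exact h
    -- conditional expectation of the increment is zero
    have hcond : ∀ n, μ[X n | 𝒢 n] =ᵐ[μ] 0 := by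
      intro n
      have h1 : X n = (K (n + 1) - K n) - d n := rfl
      rw [h1]
      refine (condExp_sub ((hint (n + 1)).sub (hint n)) (hd_int n) (𝒢 n)).trans ?_
      have h2 : μ[d n | 𝒢 n] = d n :=
        condExp_of_stronglyMeasurable (𝒢.le n) (hd_meas n) (hd_int n)
      rw [h2]
      filter_upwards with ω
      simp [hd]
    -- cross term vanishes
    have hcross : ∀ n, ∫ ω, (∑ k ∈ Finset.range n, X k ω) * X n ω ∂μ = 0 := by
      intro n
      set J : Ω → ℝ := fun ω => ∑ k ∈ Finset.range n, X k ω with hJdef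
      have hJX_int : Integrable (J * X n) μ := aux_integrable_mul (hJ2 n) (hX2 n)
      have e1 : ∫ ω, J ω * X n ω ∂μ = ∫ ω, (μ[J * X n | 𝒢 n]) ω ∂μ :=
        (integral_condExp (𝒢.le n)).symm
      rw [show (∫ ω, J ω * X n ω ∂μ) = ∫ ω, (J * X n) ω ∂μ from rfl, ← integral_condExp (𝒢.le n)]
      have e2 : μ[J * X n | 𝒢 n] =ᵐ[μ] J * μ[X n | 𝒢 n] :=
        condExp_mul_of_stronglyMeasurable_left (hJmeas n) hJX_int ((hX_int n))
      have e3 : μ[J * X n | 𝒢 n] =ᵐ[μ] 0 := by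
        refine e2.trans ?_
        filter_upwards [hcond n] with ω hω
        simp [Pi.mul_apply, hω]
      rw [integral_congr_ae e3]
      simp
    -- second moment of increments
    have hXsq : ∀ n, ∫ ω, (X n ω) ^ 2 ∂μ ≤ r n * ∫ ω, K n ω ∂μ := by
      intro n
      have hDK2 : MemLp (K (n + 1) - K n) 2 μ := (hK2 (n + 1)).sub (hK2 n)
      have hDKsq_int : Integrable (fun ω => (K (n + 1) ω - K n ω) ^ 2) μ :=
        (memLp_two_iff_integrable_sq hDK2.aestronglyMeasurable).mp hDK2
      have hdsq_int : Integrable (fun ω => (d n ω) ^ 2) μ :=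
        (memLp_two_iff_integrable_sq (hd2 n).aestronglyMeasurable).mp (hd2 n)
      have hmul_int : Integrable (fun ω => d n ω * (K (n + 1) ω - K n ω)) μ :=
        aux_integrable_mul (hd2 n) hDK2
      -- ∫ d * ΔK = ∫ d²
      have hcross2 : ∫ ω, d n ω * (K (n + 1) ω - K n ω) ∂μ = ∫ ω, (d n ω) ^ 2 ∂μ := by
        have e1 : μ[d n * (K (n + 1) - K n) | 𝒢 n] =ᵐ[μ] d n * μ[K (n + 1) - K n | 𝒢 n] :=
          condExp_mul_of_stronglyMeasurable_left (hd_meas n) hmul_int ((hint (n + 1)).sub (hint n))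
        calc ∫ ω, d n ω * (K (n + 1) ω - K n ω) ∂μ
            = ∫ ω, (μ[d n * (K (n + 1) - K n) | 𝒢 n]) ω ∂μ := (integral_condExp (𝒢.le n)).symm
          _ = ∫ ω, (d n ω) ^ 2 ∂μ := by
              rw [integral_congr_ae e1]
              refine integral_congr_ae ?_
              filter_upwards with ω
              simp [hd, sq]
      have hexp : ∫ ω, (X n ω) ^ 2 ∂μ
          = ∫ ω, (K (n + 1) ω - K n ω) ^ 2 ∂μ - ∫ ω, (d n ω) ^ 2 ∂μ := by
        have hpt : ∀ ω, (X n ω) ^ 2 = (K (n + 1) ω - K n ω) ^ 2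
            - 2 * (d n ω * (K (n + 1) ω - K n ω)) + (d n ω) ^ 2 := by
          intro ω; simp only [hX]; ring
        calc ∫ ω, (X n ω) ^ 2 ∂μ
            = ∫ ω, ((K (n + 1) ω - K n ω) ^ 2
                - 2 * (d n ω * (K (n + 1) ω - K n ω)) + (d n ω) ^ 2) ∂μ := by
              exact integral_congr_ae (Filter.Eventually.of_forall hpt)
          _ = ∫ ω, ((K (n + 1) ω - K n ω) ^ 2
                - 2 * (d n ω * (K (n + 1) ω - K n ω))) ∂μ + ∫ ω, (d n ω) ^ 2 ∂μ := by
              have h1 : Integrable (fun ω => (K (n + 1) ω - K n ω) ^ 2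
                  - 2 * (d n ω * (K (n + 1) ω - K n ω))) μ :=
                hDKsq_int.sub (hmul_int.const_mul 2)
              rw [integral_add h1 hdsq_int]
          _ = ∫ ω, (K (n + 1) ω - K n ω) ^ 2 ∂μ
                - 2 * ∫ ω, d n ω * (K (n + 1) ω - K n ω) ∂μ + ∫ ω, (d n ω) ^ 2 ∂μ := by
              have h2 : Integrable (fun ω => 2 * (d n ω * (K (n + 1) ω - K n ω))) μ :=
                hmul_int.const_mul 2
              rw [integral_sub hDKsq_int h2, integral_const_mul]
          _ = _ := by rw [hcross2]; ring
      have hvar' : ∫ ω, (K (n + 1) ω - K n ω) ^ 2 ∂μ ≤ r n * ∫ ω, K n ω ∂μ := by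
        rw [← integral_condExp (𝒢.le n) (f := fun ω => (K (n + 1) ω - K n ω) ^ 2),
          ← integral_const_mul]
        exact integral_mono_ae integrable_condExp ((hint n).const_mul (r n)) (hvar n)
      have hd2nn : 0 ≤ ∫ ω, (d n ω) ^ 2 ∂μ := integral_nonneg fun ω => sq_nonneg _
      linarith [hexp, hvar', hd2nn]
    -- expected value of K grows at most geometrically
    have hIK0 : ∫ ω, K 0 ω ∂μ = K0 := by
      have : (fun ω => K 0 ω) = fun _ => K0 := funext hK0
      rw [this, integral_const]
      simp
    have hEK : ∀ k, ∫ ω, K k ω ∂μ ≤ K0 * ∏ i ∈ Finset.range k, (1 + p i) := by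
      intro k
      induction k with
      | zero => simp [hIK0]
      | succ k ih =>
        have hsplit : ∫ ω, K (k + 1) ω ∂μ
            = ∫ ω, (K (k + 1) ω - K k ω) ∂μ + ∫ ω, K k ω ∂μ := by
          have ha : Integrable (fun ω => K (k + 1) ω - K k ω) μ := (hint (k + 1)).sub (hint k)
          rw [← integral_add ha (hint k)]
          simp
        have hdk : ∫ ω, (K (k + 1) ω - K k ω) ∂μ = ∫ ω, d k ω ∂μ := by
          rw [hd]
          exact (integral_condExp (𝒢.le k) (f := K (k + 1) - K k)).symm
        have hdle : ∫ ω, d k ω ∂μ ≤ p k * ∫ ω, K k ω ∂μ := by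
          rw [← integral_const_mul]
          refine integral_mono_ae (hd_int k) ((hint k).const_mul (p k)) ?_
          filter_upwards [hdrift k] with ω hω
          exact (le_abs_self _).trans hω
        have hKnn' : 0 ≤ ∫ ω, K k ω ∂μ := integral_nonneg fun ω => hKnn k ω
        have h1 : ∫ ω, K (k + 1) ω ∂μ ≤ (1 + p k) * ∫ ω, K k ω ∂μ := by
          rw [hsplit, hdk]; nlinarith
        calc ∫ ω, K (k + 1) ω ∂μ ≤ (1 + p k) * ∫ ω, K k ω ∂μ := h1
          _ ≤ (1 + p k) * (K0 * ∏ i ∈ Finset.range k, (1 + p i)) :=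
              mul_le_mul_of_nonneg_left ih (by linarith [hp k])
          _ = K0 * ∏ i ∈ Finset.range (k + 1), (1 + p i) := by
              rw [Finset.prod_range_succ]; ring
    have hK0nn : 0 ≤ K0 := hIK0 ▸ integral_nonneg fun ω => hKnn 0 ω
    -- main induction
    intro n
    have main : ∀ m, ∫ ω, (∑ k ∈ Finset.range m, X k ω) ^ 2 ∂μ ≤
        ∑ k ∈ Finset.range m, r k * ∫ ω, K k ω ∂μ := by
      intro m
      induction m with
      | zero => simp
      | succ m ih =>
        have hJ2m := hJ2 m
        have hJsq_int : Integrable (fun ω => (∑ k ∈ Finset.range m, X k ω) ^ 2) μ :=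
          (memLp_two_iff_integrable_sq hJ2m.aestronglyMeasurable).mp hJ2m
        have hXsq_int : Integrable (fun ω => (X m ω) ^ 2) μ :=
          (memLp_two_iff_integrable_sq (hX2 m).aestronglyMeasurable).mp (hX2 m)
        have hJX_int : Integrable (fun ω => (∑ k ∈ Finset.range m, X k ω) * X m ω) μ :=
          aux_integrable_mul hJ2m (hX2 m)
        have hexp : ∫ ω, (∑ k ∈ Finset.range (m + 1), X k ω) ^ 2 ∂μ
            = ∫ ω, (∑ k ∈ Finset.range m, X k ω) ^ 2 ∂μ
              + 2 * ∫ ω, (∑ k ∈ Finset.range m, X k ω) * X m ω ∂μ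
              + ∫ ω, (X m ω) ^ 2 ∂μ := by
          have hpt : ∀ ω, (∑ k ∈ Finset.range (m + 1), X k ω) ^ 2
              = (∑ k ∈ Finset.range m, X k ω) ^ 2
                + 2 * ((∑ k ∈ Finset.range m, X k ω) * X m ω) + (X m ω) ^ 2 := by
            intro ω
            rw [Finset.sum_range_succ]
            ring
          calc ∫ ω, (∑ k ∈ Finset.range (m + 1), X k ω) ^ 2 ∂μ
              = ∫ ω, ((∑ k ∈ Finset.range m, X k ω) ^ 2
                  + 2 * ((∑ k ∈ Finset.range m, X k ω) * X m ω) + (X m ω) ^ 2) ∂μ :=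
                integral_congr_ae (Filter.Eventually.of_forall hpt)
            _ = _ := by
                have hb : Integrable (fun ω => 2 * ((∑ k ∈ Finset.range m, X k ω) * X m ω)) μ :=
                  hJX_int.const_mul 2
                have hc : Integrable (fun ω => (∑ k ∈ Finset.range m, X k ω) ^ 2
                    + 2 * ((∑ k ∈ Finset.range m, X k ω) * X m ω)) μ := hJsq_int.add hb
                rw [integral_add hc hXsq_int, integral_add hJsq_int hb, integral_const_mul]
        rw [hexp, hcross m, Finset.sum_range_succ]
        have := hXsq m
        linarith [ih]
    have hfin : ∑ k ∈ Finset.range n, r k * ∫ ω, K k ω ∂μ ≤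
        K0 * ∑ k ∈ Finset.range n, r k * ∏ i ∈ Finset.Ico 0 k, (1 + p i) := by
      rw [Finset.mul_sum]
      refine Finset.sum_le_sum fun k _ => ?_
      have : ∏ i ∈ Finset.Ico 0 k, (1 + p i) = ∏ i ∈ Finset.range k, (1 + p i) := by
        rw [Finset.range_eq_Ico]
      rw [this]
      calc r k * ∫ ω, K k ω ∂μ ≤ r k * (K0 * ∏ i ∈ Finset.range k, (1 + p i)) :=
            mul_le_mul_of_nonneg_left (hEK k) (hr k)
        _ = K0 * (r k * ∏ i ∈ Finset.range k, (1 + p i)) := by ring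
    calc ∫ ω, (I n ω - I 0 ω) ^ 2 ∂μ
        = ∫ ω, (∑ k ∈ Finset.range n, X k ω) ^ 2 ∂μ := by
          apply integral_congr_ae
          filter_upwards with ω
          rw [hJ n ω]
      _ ≤ ∑ k ∈ Finset.range n, r k * ∫ ω, K k ω ∂μ := main n
      _ ≤ _ := hfin
end

section
/- For β > 0 with β ≠ 1, the function φ_β : (0,1) → (0,∞) defined by φ_β(t) = (1-t)^{1/(β-1)} / t^{β/(β-1)} is a bijection onto (0,∞), and there exist constants 0 < c_1 < c_2 such that its inverse satisfies c_1 (s^{1/β - 1} ∧ 1) ≤ φ_β^{-1}(s) ≤ (c_2 s^{1/β - 1}) ∧ 1 for all s > 0. -/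
private lemma phi_key {β t s : ℝ} (hβ : 0 < β) (hβ1 : β ≠ 1) (ht0 : 0 < t) (ht1 : t < 1)
    (hs : 0 < s) (h : (1 - t) ^ (1 / (β - 1)) / t ^ (β / (β - 1)) = s) :
    t = s ^ (1 / β - 1) * (1 - t) ^ (1 / β) := by
  have hb : β - 1 ≠ 0 := sub_ne_zero.mpr hβ1
  have hb0 : β ≠ 0 := hβ.ne'
  have h1t : (0:ℝ) < 1 - t := by linarith
  have htp : 0 < t ^ (β / (β - 1)) := Real.rpow_pos_of_pos ht0 _
  rw [div_eq_iff htp.ne'] at h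
  have h2 : t ^ (β / (β - 1)) = (1 - t) ^ (1 / (β - 1)) / s := by
    rw [eq_div_iff hs.ne', mul_comm]; exact h.symm
  have h3 : (t ^ (β / (β - 1))) ^ ((β - 1) / β) = t := by
    rw [← Real.rpow_mul ht0.le, show β / (β - 1) * ((β - 1) / β) = 1 by field_simp,
      Real.rpow_one]
  calc t = (t ^ (β / (β - 1))) ^ ((β - 1) / β) := h3.symm
    _ = ((1 - t) ^ (1 / (β - 1)) / s) ^ ((β - 1) / β) := by rw [h2]
    _ = ((1 - t) ^ (1 / (β - 1))) ^ ((β - 1) / β) / s ^ ((β - 1) / β) :=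
        Real.div_rpow (Real.rpow_nonneg h1t.le _) hs.le _
    _ = (1 - t) ^ (1 / β) / s ^ ((β - 1) / β) := by
        rw [← Real.rpow_mul h1t.le, show 1 / (β - 1) * ((β - 1) / β) = 1 / β by field_simp]
    _ = s ^ (1 / β - 1) * (1 - t) ^ (1 / β) := by
        rw [div_eq_mul_inv, ← Real.rpow_neg hs.le, mul_comm,
          show -((β - 1) / β) = 1 / β - 1 by field_simp; ring]

private lemma phi_rev {β t s : ℝ} (hβ : 0 < β) (hβ1 : β ≠ 1) (ht0 : 0 < t) (ht1 : t < 1)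
    (hs : 0 < s) (h : t = s ^ (1 / β - 1) * (1 - t) ^ (1 / β)) :
    (1 - t) ^ (1 / (β - 1)) / t ^ (β / (β - 1)) = s := by
  have hb : β - 1 ≠ 0 := sub_ne_zero.mpr hβ1
  have hb0 : β ≠ 0 := hβ.ne'
  have h1t : (0:ℝ) < 1 - t := by linarith
  have hd : 0 < (1 - t) ^ (1 / (β - 1)) := Real.rpow_pos_of_pos h1t _
  have h2 : t ^ (β / (β - 1)) = s⁻¹ * (1 - t) ^ (1 / (β - 1)) := by
    nth_rewrite 1 [h]
    rw [Real.mul_rpow (Real.rpow_nonneg hs.le _) (Real.rpow_nonneg h1t.le _),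
      ← Real.rpow_mul hs.le, ← Real.rpow_mul h1t.le,
      show (1 / β - 1) * (β / (β - 1)) = -1 by field_simp; ring,
      show 1 / β * (β / (β - 1)) = 1 / (β - 1) by field_simp,
      Real.rpow_neg_one]
  rw [h2]
  field_simp

/-- The function `φ_β(t) = (1-t)^{1/(β-1)} / t^{β/(β-1)}` is a bijection from `(0,1)`
onto `(0,∞)`, and its inverse satisfies
`c₁ (s^{1/β-1} ∧ 1) ≤ φ_β⁻¹(s) ≤ (c₂ s^{1/β-1}) ∧ 1`. -/
theorem stmt2 (β : ℝ) (hβ : 0 < β) (hβ1 : β ≠ 1) :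
    Set.BijOn (fun t : ℝ => (1 - t) ^ (1 / (β - 1)) / t ^ (β / (β - 1)))
      (Set.Ioo 0 1) (Set.Ioi 0) ∧
    ∃ c₁ c₂ : ℝ, 0 < c₁ ∧ c₁ < c₂ ∧
      ∀ s : ℝ, 0 < s → ∀ t ∈ Set.Ioo (0 : ℝ) 1,
        (1 - t) ^ (1 / (β - 1)) / t ^ (β / (β - 1)) = s →
        c₁ * min (s ^ (1 / β - 1)) 1 ≤ t ∧ t ≤ min (c₂ * s ^ (1 / β - 1)) 1 := by
  have hb : β - 1 ≠ 0 := sub_ne_zero.mpr hβ1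
  have hb0 : β ≠ 0 := hβ.ne'
  have hβinv : 0 < 1 / β := by positivity
  have hmap : Set.MapsTo (fun t : ℝ => (1 - t) ^ (1 / (β - 1)) / t ^ (β / (β - 1)))
      (Set.Ioo 0 1) (Set.Ioi 0) := by
    intro t ht
    exact div_pos (Real.rpow_pos_of_pos (by linarith [ht.2]) _)
      (Real.rpow_pos_of_pos ht.1 _)
  have step : ∀ x ∈ Set.Ioo (0:ℝ) 1, ∀ y ∈ Set.Ioo (0:ℝ) 1,
      (1 - x) ^ (1 / (β - 1)) / x ^ (β / (β - 1)) =
        (1 - y) ^ (1 / (β - 1)) / y ^ (β / (β - 1)) → x < y → False := by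
    intro x hx y hy hxy hlt
    set s := (1 - x) ^ (1 / (β - 1)) / x ^ (β / (β - 1)) with hsdef
    have hsx : 0 < s := hmap hx
    have hkx : x = s ^ (1 / β - 1) * (1 - x) ^ (1 / β) :=
      phi_key hβ hβ1 hx.1 hx.2 hsx rfl
    have hky : y = s ^ (1 / β - 1) * (1 - y) ^ (1 / β) :=
      phi_key hβ hβ1 hy.1 hy.2 hsx hxy.symm
    have hrp : 0 < s ^ (1 / β - 1) := Real.rpow_pos_of_pos hsx _
    have : y < x :=
      calc y = s ^ (1 / β - 1) * (1 - y) ^ (1 / β) := hky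
        _ < s ^ (1 / β - 1) * (1 - x) ^ (1 / β) :=
            mul_lt_mul_of_pos_left
              (Real.rpow_lt_rpow (by linarith [hy.2]) (by linarith) hβinv) hrp
        _ = x := hkx.symm
    linarith
  constructor
  · refine ⟨hmap, ?_, ?_⟩
    · intro x hx y hy hxy
      rcases lt_trichotomy x y with h | h | h
      · exact (step x hx y hy hxy h).elim
      · exact h
      · exact (step y hy x hx hxy.symm h).elim
    · intro s hs
      have hs0 : (0:ℝ) < s := hs
      have hr : 0 < s ^ (1 / β - 1) := Real.rpow_pos_of_pos hs0 _
      have hcont : ContinuousOn (fun t : ℝ => t - s ^ (1 / β - 1) * (1 - t) ^ (1 / β))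
          (Set.Icc 0 1) := by
        apply ContinuousOn.sub continuousOn_id
        apply ContinuousOn.mul continuousOn_const
        apply ContinuousOn.rpow_const (continuousOn_const.sub continuousOn_id)
        intro x _
        exact Or.inr hβinv.le
      have hg0 : (fun t : ℝ => t - s ^ (1 / β - 1) * (1 - t) ^ (1 / β)) 0
          = -(s ^ (1 / β - 1)) := by
        simp
      have hg1 : (fun t : ℝ => t - s ^ (1 / β - 1) * (1 - t) ^ (1 / β)) 1 = 1 := by
        show (1:ℝ) - s ^ (1 / β - 1) * (1 - 1) ^ (1 / β) = 1
        rw [show (1:ℝ) - 1 = 0 by norm_num, Real.zero_rpow hβinv.ne', mul_zero, sub_zero]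
      have hmem : (0:ℝ) ∈ Set.Ioo
          ((fun t : ℝ => t - s ^ (1 / β - 1) * (1 - t) ^ (1 / β)) 0)
          ((fun t : ℝ => t - s ^ (1 / β - 1) * (1 - t) ^ (1 / β)) 1) := by
        rw [hg0, hg1]
        exact ⟨by linarith, one_pos⟩
      obtain ⟨t, htmem, hgt⟩ :=
        intermediate_value_Ioo (by norm_num : (0:ℝ) ≤ 1) hcont hmem
      refine ⟨t, htmem, ?_⟩
      have ht_eq : t = s ^ (1 / β - 1) * (1 - t) ^ (1 / β) := by
        have := hgt
        simp only at this
        linarith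
      exact phi_rev hβ hβ1 htmem.1 htmem.2 hs0 ht_eq
  · refine ⟨(1/2 : ℝ) ^ (1 / β + 1), 2, Real.rpow_pos_of_pos (by norm_num) _, ?_, ?_⟩
    · have : (1/2 : ℝ) ^ (1 / β + 1) < 1 :=
        Real.rpow_lt_one (by norm_num) (by norm_num) (by positivity)
      linarith
    · intro s hs t ht heq
      have hkey := phi_key hβ hβ1 ht.1 ht.2 hs heq
      have ha : 0 < s ^ (1 / β - 1) := Real.rpow_pos_of_pos hs _
      have hu1 : (1 - t) ^ (1 / β) ≤ 1 :=
        Real.rpow_le_one (by linarith [ht.2]) (by linarith [ht.1]) hβinv.le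
      have hu0 : 0 < (1 - t) ^ (1 / β) := Real.rpow_pos_of_pos (by linarith [ht.2]) _
      have hsplit : (1/2 : ℝ) ^ (1 / β + 1) = (1/2 : ℝ) ^ (1 / β) * (1/2) := by
        rw [Real.rpow_add (by norm_num), Real.rpow_one]
      have hhalfpos : (0:ℝ) < (1/2 : ℝ) ^ (1 / β) := Real.rpow_pos_of_pos (by norm_num) _
      have hhalfle1 : (1/2 : ℝ) ^ (1 / β) ≤ 1 :=
        Real.rpow_le_one (by norm_num) (by norm_num) hβinv.le
      have hminpos : 0 ≤ min (s ^ (1 / β - 1)) 1 := le_min ha.le zero_le_one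
      constructor
      · rcases le_or_gt t (1/2) with hle | hgt
        · have h12 : (1/2 : ℝ) ^ (1 / β) ≤ (1 - t) ^ (1 / β) :=
            Real.rpow_le_rpow (by norm_num) (by linarith) hβinv.le
          have h1 : s ^ (1 / β - 1) * ((1/2 : ℝ) ^ (1 / β)) ≤ t := by
            rw [hkey]
            exact mul_le_mul_of_nonneg_left h12 ha.le
          have h2 : min (s ^ (1 / β - 1)) 1 * ((1/2 : ℝ) ^ (1 / β))
              ≤ s ^ (1 / β - 1) * ((1/2 : ℝ) ^ (1 / β)) :=
            mul_le_mul_of_nonneg_right (min_le_left _ _) hhalfpos.le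
          have h3 : (1/2 : ℝ) ^ (1 / β + 1) * min (s ^ (1 / β - 1)) 1
              ≤ (1/2 : ℝ) ^ (1 / β) * min (s ^ (1 / β - 1)) 1 := by
            apply mul_le_mul_of_nonneg_right _ hminpos
            nlinarith
          calc (1/2 : ℝ) ^ (1 / β + 1) * min (s ^ (1 / β - 1)) 1
              ≤ (1/2 : ℝ) ^ (1 / β) * min (s ^ (1 / β - 1)) 1 := h3
            _ = min (s ^ (1 / β - 1)) 1 * ((1/2 : ℝ) ^ (1 / β)) := mul_comm _ _
            _ ≤ s ^ (1 / β - 1) * ((1/2 : ℝ) ^ (1 / β)) := h2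
            _ ≤ t := h1
        · have hc : (1/2 : ℝ) ^ (1 / β + 1) ≤ 1/2 := by nlinarith
          have : (1/2 : ℝ) ^ (1 / β + 1) * min (s ^ (1 / β - 1)) 1 ≤ 1/2 * 1 :=
            mul_le_mul hc (min_le_right _ _) hminpos (by norm_num)
          linarith
      · have ht1 : t ≤ s ^ (1 / β - 1) := by
          rw [hkey]
          nlinarith
        exact le_min (by linarith) ht.2.le
end
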